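/- Let G be a finite simple graph with vertex set V, let k be a positive integer, let T ⊆ V satisfy |Γ_T(Z)| ≥ k − 1 for every Steiner T-cut Z, and fix r ∈ T. Let D be the family of demand cuts, i.e., Steiner (T,r)-cuts X with |Γ_T(X)| = k − 1. Then D is uncrossable if and only if there are no X, Y ∈ D with X ∩ T ⊆ Γ(Y). -/
import Mathlib


/-- `nbr G X` is Γ(X): the set of vertices outside `X` adjacent to a vertex of `X`. -/
def nbr {V : Type*} [Fintype V] [DecidableEq V] (G : SimpleGraph V) [DecidableRel G.Adj]
    (X : Finset V) : Finset V :=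
  Finset.univ.filter (fun v => v ∉ X ∧ ∃ u ∈ X, G.Adj u v)

/-- `cl G X` is X⁺ = X ∪ Γ(X). -/
def cl {V : Type*} [Fintype V] [DecidableEq V] (G : SimpleGraph V) [DecidableRel G.Adj]
    (X : Finset V) : Finset V :=
  X ∪ nbr G X

/-- A demand cut: a Steiner (T,r)-cut X with |Γ_T(X)| = k - 1. -/
def IsDemand {V : Type*} [Fintype V] [DecidableEq V] (G : SimpleGraph V) [DecidableRel G.Adj]
    (T : Finset V) (k : ℕ) (r : V) (X : Finset V) : Prop :=
  (X ∩ T).Nonempty ∧ (T \ cl G X).Nonempty ∧ r ∉ cl G X ∧ (nbr G X ∩ T).card = k - 1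

/-- A min-core: a minimal demand cut. -/
def IsMinCore {V : Type*} [Fintype V] [DecidableEq V] (G : SimpleGraph V) [DecidableRel G.Adj]
    (T : Finset V) (k : ℕ) (r : V) (X : Finset V) : Prop :=
  IsDemand G T k r X ∧ ∀ Y : Finset V, IsDemand G T k r Y → Y ⊆ X → Y = X

/-- A core: a demand cut containing exactly one min-core as a subset. -/
def IsCore {V : Type*} [Fintype V] [DecidableEq V] (G : SimpleGraph V) [DecidableRel G.Adj]
    (T : Finset V) (k : ℕ) (r : V) (X : Finset V) : Prop :=
  IsDemand G T k r X ∧ ∃! Z : Finset V, IsMinCore G T k r Z ∧ Z ⊆ X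

/-- The core family C(Z) of a min-core Z: the cores containing Z. -/
def coreFam {V : Type*} [Fintype V] [DecidableEq V] (G : SimpleGraph V) [DecidableRel G.Adj]
    (T : Finset V) (k : ℕ) (r : V) (Z : Finset V) : Set (Finset V) :=
  {X | IsCore G T k r X ∧ Z ⊆ X}

/-- A family F of subsets of V is uncrossable with respect to T. -/
def Uncrossable {V : Type*} [Fintype V] [DecidableEq V] (G : SimpleGraph V)
    [DecidableRel G.Adj] (T : Finset V) (F : Set (Finset V)) : Prop :=
  (∀ X ∈ F, ∀ Y ∈ F, (X ∩ Y ∈ F ∧ X ∪ Y ∈ F) ∨ (X \ cl G Y ∈ F ∧ Y \ cl G X ∈ F)) ∧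
  (∀ X ∈ F, ∀ Y ∈ F, (X ∩ Y ∩ T).Nonempty → X ∩ Y ∈ F ∧ X ∪ Y ∈ F)

section Helpers

variable {V : Type*} [Fintype V] [DecidableEq V] (G : SimpleGraph V) [DecidableRel G.Adj]

lemma mem_nbr {v : V} {X : Finset V} :
    v ∈ nbr G X ↔ v ∉ X ∧ ∃ u ∈ X, G.Adj u v := by
  simp [nbr]

lemma subset_cl (X : Finset V) : X ⊆ cl G X := Finset.subset_union_left

lemma nbr_subset_cl (X : Finset V) : nbr G X ⊆ cl G X := Finset.subset_union_right

lemma cl_mono {X Y : Finset V} (h : X ⊆ Y) : cl G X ⊆ cl G Y := by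
  intro v hv
  rcases Finset.mem_union.1 hv with h1 | h1
  · exact subset_cl G Y (h h1)
  · rcases (mem_nbr G).1 h1 with ⟨hvX, u, hu, hadj⟩
    by_cases hvY : v ∈ Y
    · exact subset_cl G Y hvY
    · exact nbr_subset_cl G Y ((mem_nbr G).2 ⟨hvY, u, h hu, hadj⟩)

lemma cl_union_subset (X Y : Finset V) : cl G (X ∪ Y) ⊆ cl G X ∪ cl G Y := by
  intro v hv
  rcases Finset.mem_union.1 hv with h1 | h1
  · rcases Finset.mem_union.1 h1 with h2 | h2
    · exact Finset.mem_union_left _ (subset_cl G X h2)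
    · exact Finset.mem_union_right _ (subset_cl G Y h2)
  · rcases (mem_nbr G).1 h1 with ⟨hvXY, u, hu, hadj⟩
    have hvX : v ∉ X := fun h => hvXY (Finset.mem_union_left _ h)
    have hvY : v ∉ Y := fun h => hvXY (Finset.mem_union_right _ h)
    rcases Finset.mem_union.1 hu with h2 | h2
    · exact Finset.mem_union_left _ (nbr_subset_cl G X ((mem_nbr G).2 ⟨hvX, u, h2, hadj⟩))
    · exact Finset.mem_union_right _ (nbr_subset_cl G Y ((mem_nbr G).2 ⟨hvY, u, h2, hadj⟩))

-- pointwise facts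
lemma nbr_inter_sub {v : V} {X Y : Finset V} (h : v ∈ nbr G (X ∩ Y)) :
    v ∈ nbr G X ∨ v ∈ nbr G Y := by
  rcases (mem_nbr G).1 h with ⟨hv, u, hu, hadj⟩
  rcases Finset.mem_inter.1 hu with ⟨huX, huY⟩
  by_cases hvX : v ∈ X
  · by_cases hvY : v ∈ Y
    · exact absurd (Finset.mem_inter.2 ⟨hvX, hvY⟩) hv
    · exact Or.inr ((mem_nbr G).2 ⟨hvY, u, huY, hadj⟩)
  · exact Or.inl ((mem_nbr G).2 ⟨hvX, u, huX, hadj⟩)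

lemma nbr_union_sub {v : V} {X Y : Finset V} (h : v ∈ nbr G (X ∪ Y)) :
    v ∈ nbr G X ∨ v ∈ nbr G Y := by
  rcases (mem_nbr G).1 h with ⟨hv, u, hu, hadj⟩
  have hvX : v ∉ X := fun hx => hv (Finset.mem_union_left _ hx)
  have hvY : v ∉ Y := fun hy => hv (Finset.mem_union_right _ hy)
  rcases Finset.mem_union.1 hu with h2 | h2
  · exact Or.inl ((mem_nbr G).2 ⟨hvX, u, h2, hadj⟩)
  · exact Or.inr ((mem_nbr G).2 ⟨hvY, u, h2, hadj⟩)

lemma nbr_inter_union_sub {v : V} {X Y : Finset V}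
    (h1 : v ∈ nbr G (X ∩ Y)) (h2 : v ∈ nbr G (X ∪ Y)) :
    v ∈ nbr G X ∧ v ∈ nbr G Y := by
  rcases (mem_nbr G).1 h1 with ⟨_, u, hu, hadj⟩
  rcases Finset.mem_inter.1 hu with ⟨huX, huY⟩
  have hv2 := ((mem_nbr G).1 h2).1
  have hvX : v ∉ X := fun hx => hv2 (Finset.mem_union_left _ hx)
  have hvY : v ∉ Y := fun hy => hv2 (Finset.mem_union_right _ hy)
  exact ⟨(mem_nbr G).2 ⟨hvX, u, huX, hadj⟩, (mem_nbr G).2 ⟨hvY, u, huY, hadj⟩⟩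

/-- If `v` is a neighbor of `X \ cl Y` then `v ∉ Y`. -/
lemma nbr_sdiff_not_mem {v : V} {X Y : Finset V} (h : v ∈ nbr G (X \ cl G Y)) : v ∉ Y := by
  rcases (mem_nbr G).1 h with ⟨hv, u, hu, hadj⟩
  rcases Finset.mem_sdiff.1 hu with ⟨huX, hucl⟩
  intro hvY
  have huY : u ∉ Y := fun h => hucl (subset_cl G Y h)
  exact hucl (nbr_subset_cl G Y ((mem_nbr G).2 ⟨huY, v, hvY, hadj.symm⟩))

lemma nbr_sdiff_sub {v : V} {X Y : Finset V} (h : v ∈ nbr G (X \ cl G Y)) :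
    v ∈ nbr G X ∨ v ∈ nbr G Y := by
  have hvY : v ∉ Y := nbr_sdiff_not_mem G h
  rcases (mem_nbr G).1 h with ⟨hv, u, hu, hadj⟩
  rcases Finset.mem_sdiff.1 hu with ⟨huX, hucl⟩
  by_cases hvX : v ∈ X
  · have hvcl : v ∈ cl G Y := by
      by_contra hc
      exact hv (Finset.mem_sdiff.2 ⟨hvX, hc⟩)
    rcases Finset.mem_union.1 hvcl with h2 | h2
    · exact absurd h2 hvY
    · exact Or.inr h2
  · exact Or.inl ((mem_nbr G).2 ⟨hvX, u, huX, hadj⟩)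

lemma nbr_sdiff_sdiff_sub {v : V} {X Y : Finset V}
    (h1 : v ∈ nbr G (X \ cl G Y)) (h2 : v ∈ nbr G (Y \ cl G X)) :
    v ∈ nbr G X ∧ v ∈ nbr G Y := by
  have hvY : v ∉ Y := nbr_sdiff_not_mem G h1
  have hvX : v ∉ X := nbr_sdiff_not_mem G h2
  rcases (mem_nbr G).1 h1 with ⟨_, u, hu, hadj⟩
  rcases (mem_nbr G).1 h2 with ⟨_, w, hw, hadj'⟩
  exact ⟨(mem_nbr G).2 ⟨hvX, u, (Finset.mem_sdiff.1 hu).1, hadj⟩,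
         (mem_nbr G).2 ⟨hvY, w, (Finset.mem_sdiff.1 hw).1, hadj'⟩⟩

lemma card_add_card_le {A B C D : Finset V} (h1 : A ∪ B ⊆ C ∪ D) (h2 : A ∩ B ⊆ C ∩ D) :
    A.card + B.card ≤ C.card + D.card := by
  rw [← Finset.card_union_add_card_inter A B, ← Finset.card_union_add_card_inter C D]
  exact Nat.add_le_add (Finset.card_le_card h1) (Finset.card_le_card h2)

lemma submod (T X Y : Finset V) :
    (nbr G (X ∩ Y) ∩ T).card + (nbr G (X ∪ Y) ∩ T).card ≤
      (nbr G X ∩ T).card + (nbr G Y ∩ T).card := by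
  apply card_add_card_le
  · intro v hv
    rcases Finset.mem_union.1 hv with h | h <;>
      rcases Finset.mem_inter.1 h with ⟨h', hT⟩
    · rcases nbr_inter_sub G h' with h2 | h2
      · exact Finset.mem_union_left _ (Finset.mem_inter.2 ⟨h2, hT⟩)
      · exact Finset.mem_union_right _ (Finset.mem_inter.2 ⟨h2, hT⟩)
    · rcases nbr_union_sub G h' with h2 | h2
      · exact Finset.mem_union_left _ (Finset.mem_inter.2 ⟨h2, hT⟩)
      · exact Finset.mem_union_right _ (Finset.mem_inter.2 ⟨h2, hT⟩)
  · intro v hv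
    rcases Finset.mem_inter.1 hv with ⟨h1, h2⟩
    rcases Finset.mem_inter.1 h1 with ⟨h1', hT⟩
    rcases Finset.mem_inter.1 h2 with ⟨h2', _⟩
    obtain ⟨hx, hy⟩ := nbr_inter_union_sub G h1' h2'
    exact Finset.mem_inter.2 ⟨Finset.mem_inter.2 ⟨hx, hT⟩, Finset.mem_inter.2 ⟨hy, hT⟩⟩

lemma posimod (T X Y : Finset V) :
    (nbr G (X \ cl G Y) ∩ T).card + (nbr G (Y \ cl G X) ∩ T).card ≤
      (nbr G X ∩ T).card + (nbr G Y ∩ T).card := by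
  apply card_add_card_le
  · intro v hv
    rcases Finset.mem_union.1 hv with h | h <;>
      rcases Finset.mem_inter.1 h with ⟨h', hT⟩
    · rcases nbr_sdiff_sub G h' with h2 | h2
      · exact Finset.mem_union_left _ (Finset.mem_inter.2 ⟨h2, hT⟩)
      · exact Finset.mem_union_right _ (Finset.mem_inter.2 ⟨h2, hT⟩)
    · rcases nbr_sdiff_sub G h' with h2 | h2
      · exact Finset.mem_union_right _ (Finset.mem_inter.2 ⟨h2, hT⟩)
      · exact Finset.mem_union_left _ (Finset.mem_inter.2 ⟨h2, hT⟩)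
  · intro v hv
    rcases Finset.mem_inter.1 hv with ⟨h1, h2⟩
    rcases Finset.mem_inter.1 h1 with ⟨h1', hT⟩
    rcases Finset.mem_inter.1 h2 with ⟨h2', _⟩
    obtain ⟨hx, hy⟩ := nbr_sdiff_sdiff_sub G h1' h2'
    exact Finset.mem_inter.2 ⟨Finset.mem_inter.2 ⟨hx, hT⟩, Finset.mem_inter.2 ⟨hy, hT⟩⟩

end Helpers

theorem stmt_10 {V : Type*} [Fintype V] [DecidableEq V]
    (G : SimpleGraph V) [DecidableRel G.Adj] (k : ℕ) (hk : 1 ≤ k)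
    (T : Finset V)
    -- |Γ_T(Z)| ≥ k-1 for every Steiner T-cut Z
    (hTconn : ∀ Z : Finset V, (Z ∩ T).Nonempty → (T \ cl G Z).Nonempty →
      k - 1 ≤ (nbr G Z ∩ T).card)
    (r : V) (hr : r ∈ T) :
    Uncrossable G T {X : Finset V | IsDemand G T k r X} ↔
      ¬ ∃ X ∈ {X : Finset V | IsDemand G T k r X}, ∃ Y ∈ {X : Finset V | IsDemand G T k r X},
        X ∩ T ⊆ nbr G Y := by
  constructor
  · rintro ⟨h1, _⟩ ⟨X, hX, Y, hY, hsub⟩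
    rcases h1 X hX Y hY with ⟨⟨⟨v, hv⟩, _⟩, _⟩ | ⟨⟨⟨v, hv⟩, _⟩, _⟩
    · rcases Finset.mem_inter.1 hv with ⟨hvXY, hvT⟩
      rcases Finset.mem_inter.1 hvXY with ⟨hvX, hvY⟩
      have : v ∈ nbr G Y := hsub (Finset.mem_inter.2 ⟨hvX, hvT⟩)
      exact ((mem_nbr G).1 this).1 hvY
    · rcases Finset.mem_inter.1 hv with ⟨hvXY, hvT⟩
      rcases Finset.mem_sdiff.1 hvXY with ⟨hvX, hvcl⟩
      exact hvcl (nbr_subset_cl G Y (hsub (Finset.mem_inter.2 ⟨hvX, hvT⟩)))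
  · intro hno
    have key : ∀ X, IsDemand G T k r X → ∀ Y, IsDemand G T k r Y → (X ∩ Y ∩ T).Nonempty →
        IsDemand G T k r (X ∩ Y) ∧ IsDemand G T k r (X ∪ Y) := by
      intro X hX Y hY hne
      obtain ⟨hXne, hXcut, hXr, hXcard⟩ := hX
      obtain ⟨hYne, hYcut, hYr, hYcard⟩ := hY
      have hrI : r ∉ cl G (X ∩ Y) := fun h => hXr (cl_mono G Finset.inter_subset_left h)
      have hrU : r ∉ cl G (X ∪ Y) := fun h => by
        rcases Finset.mem_union.1 (cl_union_subset G X Y h) with h2 | h2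
        exacts [hXr h2, hYr h2]
      have hIcut : (T \ cl G (X ∩ Y)).Nonempty := ⟨r, Finset.mem_sdiff.2 ⟨hr, hrI⟩⟩
      have hUcut : (T \ cl G (X ∪ Y)).Nonempty := ⟨r, Finset.mem_sdiff.2 ⟨hr, hrU⟩⟩
      have hUne : ((X ∪ Y) ∩ T).Nonempty := by
        obtain ⟨v, hv⟩ := hXne
        rcases Finset.mem_inter.1 hv with ⟨h1, h2⟩
        exact ⟨v, Finset.mem_inter.2 ⟨Finset.mem_union_left _ h1, h2⟩⟩
      have ha := hTconn (X ∩ Y) hne hIcut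
      have hb := hTconn (X ∪ Y) hUne hUcut
      have hsum := submod G T X Y
      rw [hXcard, hYcard] at hsum
      exact ⟨⟨hne, hIcut, hrI, by omega⟩, ⟨hUne, hUcut, hrU, by omega⟩⟩
    refine ⟨fun X hX Y hY => ?_, fun X hX Y hY hne => key X hX Y hY hne⟩
    by_cases hne : (X ∩ Y ∩ T).Nonempty
    · exact Or.inl (key X hX Y hY hne)
    · right
      have hIempty : X ∩ Y ∩ T = ∅ := Finset.not_nonempty_iff_eq_empty.1 hne
      obtain ⟨hXne, hXcut, hXr, hXcard⟩ := hX
      obtain ⟨hYne, hYcut, hYr, hYcard⟩ := hY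
      have hdisj : ∀ Z W : Finset V, Z ∩ W ∩ T = ∅ → IsDemand G T k r Z →
          IsDemand G T k r W → ((Z \ cl G W) ∩ T).Nonempty := by
        intro Z W hE hZ hW
        rcases Finset.eq_empty_or_nonempty ((Z \ cl G W) ∩ T) with hc | hc
        · exfalso
          apply hno
          refine ⟨Z, hZ, W, hW, fun v hv => ?_⟩
          rcases Finset.mem_inter.1 hv with ⟨hvZ, hvT⟩
          have hvW : v ∉ W := fun h => by
            have : v ∈ Z ∩ W ∩ T :=
              Finset.mem_inter.2 ⟨Finset.mem_inter.2 ⟨hvZ, h⟩, hvT⟩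
            simp [hE] at this
          have hvcl : v ∈ cl G W := by
            by_contra hcl
            have : v ∈ (Z \ cl G W) ∩ T :=
              Finset.mem_inter.2 ⟨Finset.mem_sdiff.2 ⟨hvZ, hcl⟩, hvT⟩
            simp [hc] at this
          rcases Finset.mem_union.1 hvcl with h2 | h2
          exacts [absurd h2 hvW, h2]
        · exact hc
      have hAne := hdisj X Y hIempty ⟨hXne, hXcut, hXr, hXcard⟩ ⟨hYne, hYcut, hYr, hYcard⟩
      have hBne := hdisj Y X (by rw [Finset.inter_comm Y X]; exact hIempty)
        ⟨hYne, hYcut, hYr, hYcard⟩ ⟨hXne, hXcut, hXr, hXcard⟩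
      have hrA : r ∉ cl G (X \ cl G Y) := fun h => hXr (cl_mono G (Finset.sdiff_subset) h)
      have hrB : r ∉ cl G (Y \ cl G X) := fun h => hYr (cl_mono G (Finset.sdiff_subset) h)
      have hAcut : (T \ cl G (X \ cl G Y)).Nonempty := ⟨r, Finset.mem_sdiff.2 ⟨hr, hrA⟩⟩
      have hBcut : (T \ cl G (Y \ cl G X)).Nonempty := ⟨r, Finset.mem_sdiff.2 ⟨hr, hrB⟩⟩
      have ha := hTconn (X \ cl G Y) hAne hAcut
      have hb := hTconn (Y \ cl G X) hBne hBcut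
      have hsum := posimod G T X Y
      rw [hXcard, hYcard] at hsum
      exact ⟨⟨hAne, hAcut, hrA, by omega⟩, ⟨hBne, hBcut, hrB, by omega⟩⟩
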